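/- Let x ∈ ℝ^n satisfy x_i ≠ 1 for all i, let D = diag(1 - x_1, ..., 1 - x_n), and suppose t(x) = Σ_i 1/(1-x_i) ≠ 1. Then jᵀ (J - D)^{-1} j = t(x)/(t(x) - 1), where j is the all-ones column vector and J = j·jᵀ. -/

import Mathlib

open Matrix

theorem stmt_6 (n : ℕ) (x : Fin n → ℝ) (h : ∀ i, x i ≠ 1)
    (ht : (∑ i, 1 / (1 - x i)) ≠ 1) :
    (fun _ : Fin n => (1 : ℝ)) ⬝ᵥ
        (((Matrix.of fun _ _ : Fin n => (1 : ℝ)) -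
          Matrix.diagonal (fun i => 1 - x i))⁻¹.mulVec fun _ => (1 : ℝ)) =
      (∑ i, 1 / (1 - x i)) / ((∑ i, 1 / (1 - x i)) - 1) := by
  set t : ℝ := ∑ i, 1 / (1 - x i) with htdef
  have hxi : ∀ i, (1 : ℝ) - x i ≠ 0 := fun i => sub_ne_zero.mpr (fun e => h i e.symm)
  set M : Matrix (Fin n) (Fin n) ℝ :=
    (Matrix.of fun _ _ : Fin n => (1 : ℝ)) - Matrix.diagonal (fun i => 1 - x i) with hM
  set u : Fin n → ℝ := fun i => 1 / (1 - x i) with hu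
  -- factorization M = (-D) * (1 + col (-u) * row j)
  have hfact : M = (-(Matrix.diagonal (fun i => 1 - x i))) *
      (1 + Matrix.replicateCol Unit (-u) * Matrix.replicateRow Unit (fun _ => (1:ℝ))) := by
    ext i k
    rw [Matrix.mul_apply, Finset.sum_eq_single i]
    · simp only [hM, Matrix.sub_apply, Matrix.of_apply, Matrix.neg_apply,
        Matrix.diagonal_apply_eq, Matrix.add_apply, Matrix.one_apply, Matrix.mul_apply,
        Matrix.replicateCol_apply, Matrix.replicateRow_apply, Pi.neg_apply, Finset.univ_unique,
        Finset.sum_const, Finset.card_singleton, one_smul, hu, Matrix.diagonal_apply]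
      have hk := hxi i
      by_cases hik : i = k
      · subst hik; simp [mul_add]; field_simp; ring
      · simp [hik, mul_add]; field_simp; ring
    · intro j _ hji
      simp [Matrix.diagonal_apply_ne' _ hji]
    · intro habs; exact absurd (Finset.mem_univ i) habs
  have hdet : IsUnit M.det := by
    rw [hfact, Matrix.det_mul, Matrix.det_one_add_replicateCol_mul_replicateRow]
    have h1 : (dotProduct (fun _ => (1:ℝ)) (-u)) = -t := by
      simp [dotProduct, hu, htdef]
    rw [h1]
    have h2 : (-(Matrix.diagonal (fun i => 1 - x i))).det ≠ 0 := by
      rw [Matrix.det_neg, Matrix.det_diagonal]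
      exact mul_ne_zero (pow_ne_zero _ (by norm_num)) (Finset.prod_ne_zero_iff.2 fun i _ => hxi i)
    refine (mul_ne_zero h2 ?_).isUnit
    intro e; exact ht (by linarith)
  set v : Fin n → ℝ := fun i => u i / (t - 1) with hv
  have htm : t - 1 ≠ 0 := sub_ne_zero.mpr ht
  have hMv : M.mulVec v = fun _ => (1 : ℝ) := by
    funext k
    simp only [hM, Matrix.mulVec, dotProduct, Matrix.sub_apply, Matrix.of_apply,
      Matrix.diagonal_apply, sub_mul, Finset.sum_sub_distrib, ite_mul, zero_mul]
    rw [Finset.sum_ite_eq Finset.univ k (fun j => 1 * v j - x k * v j)]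
    simp only [Finset.mem_univ, if_true, one_mul, hv, hu]
    rw [← Finset.sum_div, ← htdef]
    have hk := hxi k
    field_simp
  have hinv : M⁻¹.mulVec (fun _ => (1:ℝ)) = v := by
    rw [← hMv, Matrix.mulVec_mulVec, Matrix.nonsing_inv_mul M hdet, Matrix.one_mulVec]
  rw [hinv]
  simp only [dotProduct, hv, one_mul, ← Finset.sum_div, hu, ← htdef]
  rfl
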